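/- Let k be a positive integer and let G be a graph with vertex partition (V_1,...,V_m) into independent sets. Suppose for every i and every v ∈ V_i, the vertex v has at most min{k−1, |V_i|−k} neighbours outside V_i. Then G has an independent transversal. -/

import Mathlib

open Finset

set_option linter.unusedSectionVars false

namespace HaxellAux

variable {V : Type*} [Fintype V] [DecidableEq V]
variable {m : ℕ} (G : SimpleGraph V) [DecidableRel G.Adj] (c : V → Fin m)

def cls (i : Fin m) : Finset V := Finset.univ.filter (fun u => c u = i)

lemma mem_cls {v : V} {i : Fin m} : v ∈ cls c i ↔ c v = i := by simp [cls]

def covL (D : List V) : Finset V := D.foldr (fun d acc => G.neighborFinset d ∪ acc) ∅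

@[simp] lemma covL_nil : covL G ([] : List V) = ∅ := rfl
@[simp] lemma covL_cons (d : V) (D : List V) :
    covL G (d :: D) = G.neighborFinset d ∪ covL G D := rfl

lemma mem_covL {D : List V} {v : V} : v ∈ covL G D ↔ ∃ d ∈ D, G.Adj d v := by
  induction D with
  | nil => simp
  | cons d D ih => simp [ih]

lemma card_covL_le (D : List V) :
    (covL G D).card ≤ (D.map (fun d => G.degree d)).sum := by
  induction D with
  | nil => simp
  | cons d D ih =>
    simp only [covL_cons, List.map_cons, List.sum_cons]
    refine le_trans (Finset.card_union_le _ _) ?_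
    have : (G.neighborFinset d).card = G.degree d := G.card_neighborFinset_eq_degree d
    omega

def regF (L : List (Fin m)) : Finset V := L.foldr (fun i acc => cls c i ∪ acc) ∅

@[simp] lemma regF_nil : regF c ([] : List (Fin m)) = ∅ := rfl
@[simp] lemma regF_cons (i : Fin m) (L : List (Fin m)) :
    regF c (i :: L) = cls c i ∪ regF c L := rfl

lemma mem_regF {L : List (Fin m)} {v : V} : v ∈ regF c L ↔ c v ∈ L := by
  induction L with
  | nil => simp
  | cons i L ih => simp [ih, mem_cls]

lemma card_regF (L : List (Fin m)) (hL : L.Nodup) :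
    (regF c L).card = (L.map (fun i => (cls c i).card)).sum := by
  induction L with
  | nil => simp
  | cons i L ih =>
    simp only [regF_cons, List.map_cons, List.sum_cons]
    rw [Finset.card_union_of_disjoint, ih (List.Nodup.of_cons hL)]
    rw [Finset.disjoint_left]
    intro v hv hv'
    rw [mem_cls] at hv
    rw [mem_regF] at hv'
    rw [hv] at hv'
    exact (List.nodup_cons.mp hL).1 hv'

/-! ### The process -/

variable (R : Finset (Fin m)) (i0 : Fin m)

/-- Uncovered part of the region. -/
def Ufs (T : Fin m → V) (s : List (Fin m) × List V) : Finset V :=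
  regF c (i0 :: s.1) \ covL G (s.1.map T ++ s.2)

/-- Conflicts of `u` with the transversal, outside the blocked list. -/
def confl (T : Fin m → V) (u : V) (B : List (Fin m)) : Finset (Fin m) :=
  R.filter (fun l => l ∉ B ∧ G.Adj (T l) u)

lemma mem_confl {T : Fin m → V} {u : V} {B : List (Fin m)} {l : Fin m} :
    l ∈ confl G R T u B ↔ l ∈ R ∧ l ∉ B ∧ G.Adj (T l) u := by
  simp [confl]

noncomputable def step (T : Fin m → V) (s : List (Fin m) × List V) :
    List (Fin m) × List V :=
  if h : (Ufs G c i0 T s).Nonempty then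
    if h2 : (confl G R T h.choose s.1).Nonempty then
      (s.1 ++ [(confl G R T h.choose s.1).min' h2], s.2 ++ [h.choose])
    else s
  else s

noncomputable def st (T : Fin m → V) (j : ℕ) : List (Fin m) × List V :=
  (step G c R i0 T)^[j] ([], [])

lemma st_zero (T : Fin m → V) : st G c R i0 T 0 = ([], []) := rfl

lemma st_succ (T : Fin m → V) (j : ℕ) :
    st G c R i0 T (j + 1) = step G c R i0 T (st G c R i0 T j) :=
  Function.iterate_succ_apply' _ _ _

lemma step_of_empty {T : Fin m → V} {s : List (Fin m) × List V}
    (h : Ufs G c i0 T s = ∅) : step G c R i0 T s = s := by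
  unfold step
  rw [dif_neg]
  rw [Finset.not_nonempty_iff_eq_empty]
  exact h

lemma step_of_noconfl {T : Fin m → V} {s : List (Fin m) × List V}
    (h : (Ufs G c i0 T s).Nonempty) (h2 : confl G R T h.choose s.1 = ∅) :
    step G c R i0 T s = s := by
  unfold step
  rw [dif_pos h, dif_neg]
  rw [Finset.not_nonempty_iff_eq_empty]
  exact h2

lemma step_of_confl {T : Fin m → V} {s : List (Fin m) × List V}
    (h : (Ufs G c i0 T s).Nonempty) (h2 : (confl G R T h.choose s.1).Nonempty) :
    step G c R i0 T s =
      (s.1 ++ [(confl G R T h.choose s.1).min' h2], s.2 ++ [h.choose]) := by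
  unfold step
  rw [dif_pos h, dif_pos h2]

/-- The three possible shapes of a step. -/
lemma step_cases (T : Fin m → V) (s : List (Fin m) × List V) :
    (step G c R i0 T s = s ∧
      (Ufs G c i0 T s = ∅ ∨
        ∃ h : (Ufs G c i0 T s).Nonempty, confl G R T h.choose s.1 = ∅)) ∨
    (∃ (h : (Ufs G c i0 T s).Nonempty) (h2 : (confl G R T h.choose s.1).Nonempty),
      step G c R i0 T s =
        (s.1 ++ [(confl G R T h.choose s.1).min' h2], s.2 ++ [h.choose])) := by
  by_cases h : (Ufs G c i0 T s).Nonempty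
  · by_cases h2 : (confl G R T h.choose s.1).Nonempty
    · exact Or.inr ⟨h, h2, step_of_confl G c R i0 h h2⟩
    · rw [Finset.not_nonempty_iff_eq_empty] at h2
      exact Or.inl ⟨step_of_noconfl G c R i0 h h2, Or.inr ⟨h, h2⟩⟩
  · rw [Finset.not_nonempty_iff_eq_empty] at h
    exact Or.inl ⟨step_of_empty (c := c) (R := R) (i0 := i0) (G := G) h, Or.inl h⟩


/-! ### Invariants along the run -/

lemma st_inv (T : Fin m → V) (j : ℕ) :
    (st G c R i0 T j).1.Nodup ∧ (∀ l ∈ (st G c R i0 T j).1, l ∈ R) ∧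
      (st G c R i0 T j).2.length = (st G c R i0 T j).1.length := by
  induction j with
  | zero => simp [st_zero]
  | succ j ih =>
    obtain ⟨h1, h2, h3⟩ := ih
    rw [st_succ]
    rcases step_cases G c R i0 T (st G c R i0 T j) with ⟨he, -⟩ | ⟨h, hc, he⟩
    · rw [he]; exact ⟨h1, h2, h3⟩
    · rw [he]
      have hmem := Finset.min'_mem _ hc
      rw [mem_confl] at hmem
      constructor
      · rw [List.nodup_append]
        refine ⟨h1, List.nodup_singleton _, ?_⟩
        intro a ha b' hb hab
        simp only [List.mem_singleton] at hb
        subst hb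
        exact hmem.2.1 (hab ▸ ha)
      constructor
      · intro l hl
        rw [List.mem_append] at hl
        rcases hl with hl | hl
        · exact h2 l hl
        · simp only [List.mem_singleton] at hl; subst hl; exact hmem.1
      · simp [h3]

lemma st_prefix_succ (T : Fin m → V) (j : ℕ) :
    (st G c R i0 T j).1 <+: (st G c R i0 T (j + 1)).1 ∧
      (st G c R i0 T j).2 <+: (st G c R i0 T (j + 1)).2 := by
  rw [st_succ]
  rcases step_cases G c R i0 T (st G c R i0 T j) with ⟨he, -⟩ | ⟨h, hc, he⟩
  · rw [he]; exact ⟨List.prefix_refl _, List.prefix_refl _⟩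
  · rw [he]; exact ⟨List.prefix_append _ _, List.prefix_append _ _⟩

lemma st_prefix_le (T : Fin m → V) {i j : ℕ} (hij : i ≤ j) :
    (st G c R i0 T i).1 <+: (st G c R i0 T j).1 ∧
      (st G c R i0 T i).2 <+: (st G c R i0 T j).2 := by
  induction j with
  | zero =>
    have : i = 0 := by omega
    subst this
    exact ⟨List.prefix_refl _, List.prefix_refl _⟩
  | succ j ih =>
    rcases Nat.lt_or_ge i (j+1) with hlt | hge
    · have hij' : i ≤ j := by omega
      obtain ⟨a1, a2⟩ := ih hij'
      obtain ⟨b1, b2⟩ := st_prefix_succ G c R i0 T j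
      exact ⟨a1.trans b1, a2.trans b2⟩
    · have : i = j + 1 := by omega
      subst this
      exact ⟨List.prefix_refl _, List.prefix_refl _⟩

lemma st_length_le (T : Fin m → V) (j : ℕ) :
    (st G c R i0 T j).1.length ≤ R.card := by
  obtain ⟨h1, h2, -⟩ := st_inv G c R i0 T j
  have := List.toFinset_card_of_nodup h1
  rw [← this]
  apply Finset.card_le_card
  intro l hl
  rw [List.mem_toFinset] at hl
  exact h2 l hl

lemma frozen_stable (T : Fin m → V) {j : ℕ}
    (h : step G c R i0 T (st G c R i0 T j) = st G c R i0 T j) (i : ℕ) :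
    st G c R i0 T (j + i) = st G c R i0 T j := by
  induction i with
  | zero => rfl
  | succ i ih =>
    have : j + (i+1) = (j + i) + 1 := by omega
    rw [this, st_succ, ih, h]

lemma frozen_final (T : Fin m → V) :
    step G c R i0 T (st G c R i0 T (R.card + 1)) = st G c R i0 T (R.card + 1) := by
  by_contra hne
  -- then no freeze at any `j ≤ R.card + 1`
  have hnofr : ∀ j, j ≤ R.card + 1 →
      step G c R i0 T (st G c R i0 T j) ≠ st G c R i0 T j := by
    intro j hj hfr
    apply hne
    have := frozen_stable G c R i0 T hfr (R.card + 1 - j)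
    have hjj : j + (R.card + 1 - j) = R.card + 1 := by omega
    rw [hjj] at this
    rw [this, hfr]
  have hlen : ∀ j, j ≤ R.card + 1 → (st G c R i0 T j).1.length = j := by
    intro j
    induction j with
    | zero => intro _; simp [st_zero]
    | succ j ih =>
      intro hj
      have hj' : j ≤ R.card + 1 := by omega
      rcases step_cases G c R i0 T (st G c R i0 T j) with ⟨he, -⟩ | ⟨h, hc, he⟩
      · exact absurd he (hnofr j hj')
      · rw [st_succ, he]
        simp [ih hj']
  have := hlen (R.card + 1) (le_refl _)
  have := st_length_le G c R i0 T (R.card + 1)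
  omega


/-! ### Swap machinery -/

lemma min'_erase {A : Finset (Fin m)} {b : Fin m} (hA : A.Nonempty)
    (hne : A.min' hA ≠ b) (h' : (A.erase b).Nonempty) :
    (A.erase b).min' h' = A.min' hA := by
  apply le_antisymm
  · exact Finset.min'_le _ _ (Finset.mem_erase.mpr ⟨hne, Finset.min'_mem _ _⟩)
  · exact Finset.le_min' _ _ _ (fun y hy => Finset.min'_le _ _ (Finset.mem_of_mem_erase hy))

lemma confl_update {T : Fin m → V} {u₀ u : V} {B : List (Fin m)} {b : Fin m}
    (hb : ¬ G.Adj u₀ u) :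
    confl G R (Function.update T b u₀) u B = (confl G R T u B).erase b := by
  ext l
  rw [mem_confl, Finset.mem_erase, mem_confl]
  by_cases hl : l = b
  · subst hl
    simp only [Function.update_self]
    constructor
    · rintro ⟨-, -, h⟩; exact absurd h hb
    · rintro ⟨h, -⟩; exact absurd rfl h
  · rw [Function.update_of_ne hl]
    constructor
    · rintro ⟨h1, h2, h3⟩; exact ⟨hl, h1, h2, h3⟩
    · rintro ⟨-, h1, h2, h3⟩; exact ⟨h1, h2, h3⟩

lemma step_append_form {T : Fin m → V} {s : List (Fin m) × List V}
    (h : step G c R i0 T s ≠ s) :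
    ∃ (hU : (Ufs G c i0 T s).Nonempty) (hC : (confl G R T hU.choose s.1).Nonempty),
      step G c R i0 T s =
        (s.1 ++ [(confl G R T hU.choose s.1).min' hC], s.2 ++ [hU.choose]) := by
  rcases step_cases G c R i0 T s with ⟨he, -⟩ | ⟨hU, hC, he⟩
  · exact absurd he h
  · exact ⟨hU, hC, he⟩

/-- The main swap lemma: swapping in an uncovered conflict-free vertex `u₀` of a
blocked class `b` makes the discovery trace jump up lexicographically. -/
lemma swap_trace (T : Fin m → V) (u₀ : V) (b : Fin m)
    (hbFIN : b ∈ (st G c R i0 T (R.card + 1)).1)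
    (hcov : ∀ d ∈ ((st G c R i0 T (R.card + 1)).1.map T ++ (st G c R i0 T (R.card + 1)).2),
      ¬ G.Adj d u₀) :
    ∃ (P Q : List (Fin m)), (st G c R i0 T (R.card + 1)).1 = P ++ b :: Q ∧
      ((st G c R i0 (Function.update T b u₀) (R.card + 1)).1 = P ∨
        ∃ l' Q', (st G c R i0 (Function.update T b u₀) (R.card + 1)).1 = P ++ l' :: Q' ∧
          b < l') := by
  set N := R.card + 1 with hN
  set T' := Function.update T b u₀ with hT'
  -- the step at which `b` was discovered
  have hex : ∃ j, b ∈ (st G c R i0 T (j+1)).1 := by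
    refine ⟨R.card, ?_⟩
    exact hbFIN
  set s := Nat.find hex with hs
  have F1 : b ∈ (st G c R i0 T (s+1)).1 := Nat.find_spec hex
  have hsle : s ≤ R.card := Nat.find_le hbFIN
  have F2 : b ∉ (st G c R i0 T s).1 := by
    rcases Nat.eq_zero_or_pos s with h0 | hpos
    · rw [h0, st_zero]; simp
    · intro hmem
      have : s - 1 < s := by omega
      have hmin := Nat.find_min hex this
      have : s - 1 + 1 = s := by omega
      rw [this] at hmin
      exact hmin hmem
  -- no freezing at any `j ≤ s`
  have hnf : ∀ j, j ≤ s → step G c R i0 T (st G c R i0 T j) ≠ st G c R i0 T j := by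
    intro j hj hfr
    have h1 := frozen_stable G c R i0 T hfr (s - j)
    have h2 := frozen_stable G c R i0 T hfr (s + 1 - j)
    have e1 : j + (s - j) = s := by omega
    have e2 : j + (s + 1 - j) = s + 1 := by omega
    rw [e1] at h1; rw [e2] at h2
    rw [h1] at F2
    rw [h2] at F1
    exact F2 F1
  -- non-adjacency to all final witnesses
  have hnadj : ∀ w ∈ (st G c R i0 T N).2, ¬ G.Adj u₀ w := by
    intro w hw hadj
    exact hcov w (List.mem_append_right _ hw) hadj.symm
  -- prefix equality of the two runs
  have prefeq : ∀ j, j ≤ s → st G c R i0 T' j = st G c R i0 T j := by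
    intro j
    induction j with
    | zero => intro _; rfl
    | succ j ih =>
      intro hj
      have e_j := ih (by omega)
      obtain ⟨hU, hC, he⟩ := step_append_form G c R i0 (hnf j (by omega))
      have hbBj : b ∉ (st G c R i0 T j).1 := by
        intro hmem
        exact F2 ((st_prefix_le G c R i0 T (show j ≤ s by omega)).1.subset hmem)
      have hmapeq : (st G c R i0 T j).1.map T' = (st G c R i0 T j).1.map T := by
        apply List.map_congr_left
        intro l hl
        have : l ≠ b := fun h => hbBj (h ▸ hl)
        rw [hT']
        exact Function.update_of_ne this _ _
      have hUeq : Ufs G c i0 T' (st G c R i0 T j) = Ufs G c i0 T (st G c R i0 T j) := by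
        unfold Ufs
        rw [hmapeq]
      -- the chosen witness is one of the final witnesses
      have hwit : hU.choose ∈ (st G c R i0 T N).2 := by
        have h1 : hU.choose ∈ (st G c R i0 T (j+1)).2 := by
          rw [st_succ, he]
          simp
        exact (st_prefix_le G c R i0 T (show j + 1 ≤ N by omega)).2.subset h1
      have hcE : confl G R T' hU.choose (st G c R i0 T j).1 =
          (confl G R T hU.choose (st G c R i0 T j).1).erase b := by
        rw [hT']
        exact confl_update G R (hnadj _ hwit)
      -- the discovered class at step `j` is not `b`
      have hlj : (confl G R T hU.choose (st G c R i0 T j).1).min' hC ≠ b := by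
        intro hmin
        apply F2
        apply (st_prefix_le G c R i0 T (show j + 1 ≤ s by omega)).1.subset
        rw [st_succ, he, ← hmin]
        simp
      have hne' : ((confl G R T hU.choose (st G c R i0 T j).1).erase b).Nonempty :=
        ⟨_, Finset.mem_erase.mpr ⟨hlj, Finset.min'_mem _ hC⟩⟩
      rw [st_succ, st_succ, e_j, he]
      unfold step
      rw [hUeq, dif_pos hU, hcE, dif_pos hne', min'_erase hC hlj hne']
  -- analysis at step `s`
  have e_s := prefeq s (le_refl s)
  obtain ⟨hU, hC, he⟩ := step_append_form G c R i0 (hnf s (le_refl s))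
  have hmin_b : (confl G R T hU.choose (st G c R i0 T s).1).min' hC = b := by
    have : b ∈ (st G c R i0 T s).1 ++
        [(confl G R T hU.choose (st G c R i0 T s).1).min' hC] := by
      rw [st_succ, he] at F1
      exact F1
    rw [List.mem_append] at this
    rcases this with h | h
    · exact absurd h F2
    · simp only [List.mem_singleton] at h
      exact h.symm
  have hmapeq : (st G c R i0 T s).1.map T' = (st G c R i0 T s).1.map T := by
    apply List.map_congr_left
    intro l hl
    have : l ≠ b := fun h => F2 (h ▸ hl)
    rw [hT']
    exact Function.update_of_ne this _ _
  have hUeq : Ufs G c i0 T' (st G c R i0 T s) = Ufs G c i0 T (st G c R i0 T s) := by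
    unfold Ufs
    rw [hmapeq]
  have hwit : hU.choose ∈ (st G c R i0 T N).2 := by
    have h1 : hU.choose ∈ (st G c R i0 T (s+1)).2 := by
      rw [st_succ, he]
      simp
    exact (st_prefix_le G c R i0 T (show s + 1 ≤ N by omega)).2.subset h1
  have hcE : confl G R T' hU.choose (st G c R i0 T s).1 =
      (confl G R T hU.choose (st G c R i0 T s).1).erase b := by
    rw [hT']
    exact confl_update G R (hnadj _ hwit)
  -- decomposition of the original trace
  have hdsdec : ∃ Q, (st G c R i0 T N).1 = (st G c R i0 T s).1 ++ b :: Q := by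
    have hpre : (st G c R i0 T (s+1)).1 <+: (st G c R i0 T N).1 :=
      (st_prefix_le G c R i0 T (show s + 1 ≤ N by omega)).1
    obtain ⟨t, ht⟩ := hpre
    refine ⟨t, ?_⟩
    rw [← ht, st_succ, he, hmin_b]
    simp
  obtain ⟨Q, hQ⟩ := hdsdec
  refine ⟨(st G c R i0 T s).1, Q, hQ, ?_⟩
  -- case analysis for the new run at step `s`
  by_cases hcase : ((confl G R T hU.choose (st G c R i0 T s).1).erase b).Nonempty
  · -- a strictly larger class is discovered
    right
    have hl' := Finset.min'_mem _ hcase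
    rw [Finset.mem_erase] at hl'
    have hble : b ≤ ((confl G R T hU.choose (st G c R i0 T s).1).erase b).min' hcase :=
      le_trans (le_of_eq hmin_b.symm) (Finset.min'_le _ _ hl'.2)
    have hblt : b < ((confl G R T hU.choose (st G c R i0 T s).1).erase b).min' hcase :=
      lt_of_le_of_ne hble (fun h => hl'.1 h.symm)
    have hstep' : st G c R i0 T' (s+1) =
        ((st G c R i0 T s).1 ++
            [((confl G R T hU.choose (st G c R i0 T s).1).erase b).min' hcase],
          (st G c R i0 T s).2 ++ [hU.choose]) := by
      rw [st_succ, e_s]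
      unfold step
      rw [hUeq, dif_pos hU, hcE, dif_pos hcase]
    have hpre : (st G c R i0 T' (s+1)).1 <+: (st G c R i0 T' N).1 :=
      (st_prefix_le G c R i0 T' (show s + 1 ≤ N by omega)).1
    obtain ⟨t, ht⟩ := hpre
    refine ⟨_, t, ?_, hblt⟩
    rw [← ht, hstep']
    simp
  · -- the new run freezes at step `s`
    left
    rw [Finset.not_nonempty_iff_eq_empty] at hcase
    have hfr : step G c R i0 T' (st G c R i0 T' s) = st G c R i0 T' s := by
      rw [e_s]
      unfold step
      rw [hUeq, dif_pos hU, hcE, dif_neg]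
      rw [Finset.not_nonempty_iff_eq_empty]
      exact hcase
    have hstab := frozen_stable G c R i0 T' hfr (N - s)
    have hNs : s + (N - s) = N := by omega
    rw [hNs] at hstab
    rw [hstab, e_s]


/-! ### The termination measure -/

/-- Positional encoding of a discovery trace. -/
def go (m : ℕ) : List (Fin m) → ℕ → ℕ
  | [], _ => 0
  | a :: L, e => (m - a.val) * (m+2)^e + go m L (e-1)

lemma go_le {m : ℕ} : ∀ (L : List (Fin m)) (e : ℕ), L.length ≤ e + 1 →
    go m L e ≤ (m+2)^(e+1) - 1 := by
  intro L
  induction L with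
  | nil =>
    intro e _
    have : 0 < (m+2)^(e+1) := Nat.pow_pos (by omega)
    simp only [go]
    omega
  | cons a L ih =>
    intro e hlen
    simp only [go]
    have hX : 0 < (m+2)^e := Nat.pow_pos (by omega)
    have h1 : go m L (e-1) ≤ (m+2)^e - 1 := by
      rcases Nat.eq_zero_or_pos e with he | he
      · subst he
        have hL0 : L.length = 0 := by
          simp only [List.length_cons] at hlen
          omega
        have hL : L = [] := List.length_eq_zero_iff.mp hL0
        subst hL
        simp only [go, pow_zero]
        omega
      · have he1 : e - 1 + 1 = e := by omega
        have hlen' : L.length ≤ (e - 1) + 1 := by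
          simp only [List.length_cons] at hlen
          omega
        have := ih (e-1) hlen'
        rw [he1] at this
        exact this
    have h2 : (m - a.val) * (m+2)^e ≤ (m+1) * (m+2)^e :=
      Nat.mul_le_mul_right _ (by omega)
    have h3 : (m+2)^(e+1) = (m+2) * (m+2)^e := by ring
    have h4 : (m+2) * (m+2)^e = (m+1) * (m+2)^e + (m+2)^e := by ring
    omega

lemma go_lt {m : ℕ} : ∀ (P : List (Fin m)) (b : Fin m) (Q L' : List (Fin m)) (e : ℕ),
    (P ++ b :: Q).length ≤ e + 1 → (P ++ L').length ≤ e + 1 →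
    (L' = [] ∨ ∃ l' Q', L' = l' :: Q' ∧ b < l') →
    go m (P ++ L') e < go m (P ++ b :: Q) e := by
  intro P
  induction P with
  | nil =>
    intro b Q L' e hlen1 hlen2 hcase
    have hX : 0 < (m+2)^e := Nat.pow_pos (by omega)
    have hbm : b.val < m := b.isLt
    rcases hcase with rfl | ⟨l', Q', rfl, hblt⟩
    · simp only [List.nil_append, go, List.append_nil]
      have h1 : 1 * 1 ≤ (m - b.val) * (m+2)^e :=
        Nat.mul_le_mul (by omega) (by omega)
      omega
    · simp only [List.nil_append, go]
      have hd : (m - l'.val) + 1 ≤ m - b.val := by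
        have : b.val < l'.val := hblt
        have : l'.val < m := l'.isLt
        omega
      have hQ' : go m Q' (e-1) ≤ (m+2)^e - 1 := by
        rcases Nat.eq_zero_or_pos e with he | he
        · subst he
          have hQ0 : Q'.length = 0 := by
            simp only [List.nil_append, List.length_cons] at hlen2
            omega
          have hQe : Q' = [] := List.length_eq_zero_iff.mp hQ0
          subst hQe
          simp only [go, pow_zero]
          omega
        · have he1 : e - 1 + 1 = e := by omega
          have hlen' : Q'.length ≤ (e - 1) + 1 := by
            simp only [List.nil_append, List.length_cons] at hlen2
            omega
          have := go_le Q' (e-1) hlen'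
          rw [he1] at this
          exact this
      have h1 : ((m - l'.val) + 1) * (m+2)^e ≤ (m - b.val) * (m+2)^e :=
        Nat.mul_le_mul_right _ hd
      have h2 : ((m - l'.val) + 1) * (m+2)^e = (m - l'.val) * (m+2)^e + (m+2)^e := by ring
      omega
  | cons a P ih =>
    intro b Q L' e hlen1 hlen2 hcase
    have he : 1 ≤ e := by
      simp only [List.cons_append, List.length_cons, List.length_append,
        List.length_cons] at hlen1
      omega
    simp only [List.cons_append, go]
    apply Nat.add_lt_add_left
    have he1 : e - 1 + 1 = e := by omega
    apply ih b Q L' (e-1)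
    · simp only [List.cons_append, List.length_cons] at hlen1; omega
    · simp only [List.cons_append, List.length_cons] at hlen2; omega
    · exact hcase


/-! ### Counting -/

lemma cls_filter (i : Fin m) : Finset.univ.filter (fun u => c u = i) = cls c i := rfl

lemma sum_map_add_const {α : Type*} (L : List α) (f : α → ℕ) (t : ℕ) :
    (L.map (fun x => f x + t)).sum = (L.map f).sum + L.length * t := by
  induction L with
  | nil => simp
  | cons a L ih =>
    simp only [List.map_cons, List.sum_cons, List.length_cons, ih]
    ring

lemma sum_map_le {α : Type*} (L : List α) (f g : α → ℕ) (h : ∀ x ∈ L, f x ≤ g x) :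
    (L.map f).sum ≤ (L.map g).sum := List.sum_le_sum h

lemma halt_false (k : ℕ)
    (hdeg : ∀ v : V, (G.degree v : ℤ) ≤
      min ((k : ℤ) - 1) (((Finset.univ.filter (fun u => c u = c v)).card : ℤ) - k))
    (hi0R : i0 ∉ R) (hi0ne : (cls c i0).Nonempty)
    (T : Fin m → V) (hT : ∀ i ∈ R, c (T i) = i)
    (hUe : Ufs G c i0 T (st G c R i0 T (R.card + 1)) = ∅) : False := by
  obtain ⟨hnd, hsub, hlen⟩ := st_inv G c R i0 T (R.card + 1)
  set B := (st G c R i0 T (R.card + 1)).1 with hB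
  set Ω := (st G c R i0 T (R.card + 1)).2 with hΩ
  have hsubset : regF c (i0 :: B) ⊆ covL G (B.map T ++ Ω) := by
    intro v hv
    by_contra hvn
    have : v ∈ Ufs G c i0 T (st G c R i0 T (R.card + 1)) := Finset.mem_sdiff.mpr ⟨hv, hvn⟩
    rw [hUe] at this
    exact absurd this (Finset.notMem_empty v)
  have hi0B : i0 ∉ B := fun h => hi0R (hsub i0 h)
  have hndI : (i0 :: B).Nodup := List.nodup_cons.mpr ⟨hi0B, hnd⟩
  have hcards : (cls c i0).card + (B.map (fun i => (cls c i).card)).sum ≤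
      ((B.map (fun b => G.degree (T b))).sum + (Ω.map (fun σ => G.degree σ)).sum) := by
    have h0 := le_trans (Finset.card_le_card hsubset) (card_covL_le G (B.map T ++ Ω))
    rw [card_regF c _ hndI] at h0
    simp only [List.map_cons, List.sum_cons, List.map_append, List.sum_append,
      List.map_map] at h0
    have e1 : (List.map ((fun d => G.degree d) ∘ T) B).sum
        = (B.map (fun b => G.degree (T b))).sum := rfl
    rw [e1] at h0
    exact h0
  -- per-element degree bounds
  have h1 : ∀ b ∈ B, G.degree (T b) + k ≤ (cls c b).card := by
    intro b hb
    have h := le_trans (hdeg (T b)) (min_le_right _ _)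
    rw [hT b (hsub b hb)] at h
    rw [cls_filter] at h
    omega
  have h2 : ∀ σ ∈ Ω, G.degree σ + 1 ≤ k := by
    intro σ hσ
    have h := le_trans (hdeg σ) (min_le_left _ _)
    omega
  -- sum bounds
  have hsum1 : (B.map (fun b => G.degree (T b))).sum + B.length * k ≤
      (B.map (fun i => (cls c i).card)).sum := by
    rw [← sum_map_add_const B (fun b => G.degree (T b)) k]
    exact sum_map_le _ _ _ h1
  have hsum2 : (Ω.map (fun σ => G.degree σ)).sum + Ω.length ≤ Ω.length * k := by
    have e2 : Ω.length * k = (Ω.map (fun _ => 0)).sum + Ω.length * k := by simp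
    have : (Ω.map (fun σ => G.degree σ + 1)).sum ≤ (Ω.map (fun _ => 0 + k)).sum :=
      sum_map_le _ _ _ (fun σ hσ => by have := h2 σ hσ; omega)
    rw [sum_map_add_const Ω (fun σ => G.degree σ) 1] at this
    rw [sum_map_add_const Ω (fun _ => 0) k] at this
    simp only [mul_one] at this
    simpa using this
  have hn0 : 1 ≤ (cls c i0).card := Finset.card_pos.mpr hi0ne
  rw [hlen] at hsum2
  generalize hM : B.length * k = M at hsum1 hsum2
  omega

/-! ### The main induction -/

lemma extend_IT (k : ℕ)
    (hdeg : ∀ v : V, (G.degree v : ℤ) ≤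
      min ((k : ℤ) - 1) (((Finset.univ.filter (fun u => c u = c v)).card : ℤ) - k))
    (hi0R : i0 ∉ R) (hi0ne : (cls c i0).Nonempty) :
    ∀ (n : ℕ) (T : Fin m → V),
      (∀ i ∈ R, c (T i) = i) →
      (∀ i ∈ R, ∀ j ∈ R, i ≠ j → ¬ G.Adj (T i) (T j)) →
      go m (st G c R i0 T (R.card + 1)).1 m < n →
      ∃ f : Fin m → V, (∀ i ∈ insert i0 R, c (f i) = i) ∧
        (∀ i ∈ insert i0 R, ∀ j ∈ insert i0 R, i ≠ j → ¬ G.Adj (f i) (f j)) := by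
  intro n
  induction n with
  | zero => intro T _ _ h; omega
  | succ n ih =>
    intro T hT1 hT2 hlt
    have hfr := frozen_final G c R i0 T
    by_cases hUe : Ufs G c i0 T (st G c R i0 T (R.card + 1)) = ∅
    · exact absurd (halt_false G c R i0 k hdeg hi0R hi0ne T hT1 hUe) (fun h => h)
    · have hUne : (Ufs G c i0 T (st G c R i0 T (R.card + 1))).Nonempty :=
        Finset.nonempty_iff_ne_empty.mpr hUe
      obtain ⟨hnd, hsub, hlenst⟩ := st_inv G c R i0 T (R.card + 1)
      have hCe : confl G R T hUne.choose (st G c R i0 T (R.card + 1)).1 = ∅ := by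
        by_contra hC
        have hC' : (confl G R T hUne.choose (st G c R i0 T (R.card + 1)).1).Nonempty :=
          Finset.nonempty_iff_ne_empty.mpr hC
        have hst := step_of_confl G c R i0 hUne hC'
        rw [hfr] at hst
        have := congrArg (fun p => p.1.length) hst
        simp at this
      have huU := Finset.mem_sdiff.mp (show hUne.choose ∈
        regF c (i0 :: (st G c R i0 T (R.card + 1)).1) \
          covL G ((st G c R i0 T (R.card + 1)).1.map T ++ (st G c R i0 T (R.card + 1)).2)
        from hUne.choose_spec)
      obtain ⟨hureg, hucov⟩ := huU
      rw [mem_regF] at hureg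
      -- no transversal vertex is adjacent to the chosen vertex
      have hnadjT : ∀ j ∈ R, ¬ G.Adj (T j) hUne.choose := by
        intro j hjR hadj
        by_cases hjB : j ∈ (st G c R i0 T (R.card + 1)).1
        · exact hucov ((mem_covL G).mpr
            ⟨T j, List.mem_append_left _ (List.mem_map_of_mem (f := T) hjB), hadj⟩)
        · have : j ∈ confl G R T hUne.choose (st G c R i0 T (R.card + 1)).1 :=
            (mem_confl G R).mpr ⟨hjR, hjB, hadj⟩
          rw [hCe] at this
          exact absurd this (Finset.notMem_empty _)
      rcases List.mem_cons.mp hureg with hcu | hcu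
      · -- the chosen vertex lies in class `i0` : extend the transversal
        refine ⟨Function.update T i0 hUne.choose, ?_, ?_⟩
        · intro i hi
          rcases Finset.mem_insert.mp hi with rfl | hiR
          · rw [Function.update_self]
            exact hcu
          · rw [Function.update_of_ne (fun h => hi0R (by rw [← h]; exact hiR))]
            exact hT1 i hiR
        · intro i hi j hj hij
          rcases Finset.mem_insert.mp hi with rfl | hiR <;>
            rcases Finset.mem_insert.mp hj with rfl | hjR
          · exact absurd rfl hij
          · rw [Function.update_self, Function.update_of_ne (fun h => hi0R (by rw [← h]; exact hjR))]
            exact fun h => hnadjT j hjR h.symm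
          · rw [Function.update_self, Function.update_of_ne (fun h => hi0R (by rw [← h]; exact hiR))]
            exact hnadjT i hiR
          · rw [Function.update_of_ne (fun h => hi0R (by rw [← h]; exact hiR)),
              Function.update_of_ne (fun h => hi0R (by rw [← h]; exact hjR))]
            exact hT2 i hiR j hjR hij
      · -- the chosen vertex lies in a blocked class : swap
        set b := c hUne.choose with hb
        have hbR : b ∈ R := hsub b hcu
        have hcov : ∀ d ∈ ((st G c R i0 T (R.card + 1)).1.map T ++
            (st G c R i0 T (R.card + 1)).2), ¬ G.Adj d hUne.choose :=
          fun d hd hadj => hucov ((mem_covL G).mpr ⟨d, hd, hadj⟩)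
        obtain ⟨P, Q, hQ, hcase⟩ := swap_trace G c R i0 T hUne.choose b hcu hcov
        set T' := Function.update T b hUne.choose with hT'
        have hT1' : ∀ i ∈ R, c (T' i) = i := by
          intro i hi
          by_cases hib : i = b
          · subst hib
            rw [hT', Function.update_self]
          · rw [hT', Function.update_of_ne hib]
            exact hT1 i hi
        have hT2' : ∀ i ∈ R, ∀ j ∈ R, i ≠ j → ¬ G.Adj (T' i) (T' j) := by
          intro i hi j hj hij
          by_cases hib : i = b <;> by_cases hjb : j = b
          · subst hib; subst hjb; exact absurd rfl hij
          · subst hib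
            rw [hT', Function.update_self, Function.update_of_ne hjb]
            exact fun h => hnadjT j hj h.symm
          · subst hjb
            rw [hT', Function.update_self, Function.update_of_ne hib]
            exact hnadjT i hi
          · rw [hT', Function.update_of_ne hib, Function.update_of_ne hjb]
            exact hT2 i hi j hj hij
        -- measure decreases
        have hRm : R.card ≤ m := by
          have := Finset.card_le_univ R
          rwa [Fintype.card_fin] at this
        have hlen1 : (P ++ b :: Q).length ≤ m + 1 := by
          rw [← hQ]
          have := st_length_le G c R i0 T (R.card + 1)
          omega
        have hmeas : go m (st G c R i0 T' (R.card + 1)).1 m <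
            go m (st G c R i0 T (R.card + 1)).1 m := by
          rw [hQ]
          rcases hcase with hP | ⟨l', Q', hPQ, hbl⟩
          · rw [hP]
            have hlen2 : (P ++ ([] : List (Fin m))).length ≤ m + 1 := by
              simp only [List.append_nil]
              simp only [List.length_append, List.length_cons] at hlen1
              omega
            have h := go_lt P b Q [] m hlen1 hlen2 (Or.inl rfl)
            rw [List.append_nil] at h
            exact h
          · rw [hPQ]
            apply go_lt
            · exact hlen1
            · rw [← hPQ]
              have := st_length_le G c R i0 T' (R.card + 1)
              omega
            · exact Or.inr ⟨l', Q', rfl, hbl⟩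
        exact ih T' hT1' hT2' (by omega)


/-! ### Outer induction -/

lemma build_IT (k : ℕ)
    (hdeg : ∀ v : V, (G.degree v : ℤ) ≤
      min ((k : ℤ) - 1) (((Finset.univ.filter (fun u => c u = c v)).card : ℤ) - k))
    (hsurj : Function.Surjective c) :
    ∀ (n : ℕ) (S : Finset (Fin m)), S.card ≤ n →
      ∃ f : Fin m → V, (∀ i ∈ S, c (f i) = i) ∧
        (∀ i ∈ S, ∀ j ∈ S, i ≠ j → ¬ G.Adj (f i) (f j)) := by
  intro n
  induction n with
  | zero =>
    intro S hS
    have hSe : S = ∅ := Finset.card_eq_zero.mp (Nat.le_zero.mp hS)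
    subst hSe
    exact ⟨fun i => (hsurj i).choose, fun i hi => absurd hi (Finset.notMem_empty i),
      fun i hi => absurd hi (Finset.notMem_empty i)⟩
  | succ n ih =>
    intro S hS
    rcases S.eq_empty_or_nonempty with rfl | ⟨i0, hi0⟩
    · exact ⟨fun i => (hsurj i).choose, fun i hi => absurd hi (Finset.notMem_empty i),
        fun i hi => absurd hi (Finset.notMem_empty i)⟩
    · have hcard : (S.erase i0).card ≤ n := by
        rw [Finset.card_erase_of_mem hi0]
        omega
      obtain ⟨T, hT1, hT2⟩ := ih (S.erase i0) hcard
      have hi0R : i0 ∉ S.erase i0 := Finset.notMem_erase _ _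
      have hi0ne : (cls c i0).Nonempty :=
        ⟨(hsurj i0).choose, (mem_cls (c := c)).mpr (hsurj i0).choose_spec⟩
      obtain ⟨f, hf1, hf2⟩ := extend_IT G c (S.erase i0) i0 k hdeg hi0R hi0ne
        (go m (st G c (S.erase i0) i0 T ((S.erase i0).card + 1)).1 m + 1) T hT1 hT2
        (by omega)
      rw [Finset.insert_erase hi0] at hf1 hf2
      exact ⟨f, hf1, hf2⟩

end HaxellAux

/-- If each class of the partition (the fibres of `c`) is independent and every
vertex `v` has at most `min {k - 1, |V_{c v}| - k}` neighbours (all of which lie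
outside its class), then `G` has an independent transversal. -/
theorem stmt_9 {V : Type*} [Fintype V] [DecidableEq V]
    (G : SimpleGraph V) [DecidableRel G.Adj] (k m : ℕ) (hk : 0 < k)
    (c : V → Fin m) (hsurj : Function.Surjective c)
    (hind : ∀ u v, G.Adj u v → c u ≠ c v)
    (hdeg : ∀ v : V, (G.degree v : ℤ) ≤
      min ((k : ℤ) - 1)
        (((Finset.univ.filter (fun u => c u = c v)).card : ℤ) - k)) :
    ∃ f : Fin m → V, (∀ i, c (f i) = i) ∧
      ∀ i j, i ≠ j → ¬ G.Adj (f i) (f j) := by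
  obtain ⟨f, hf1, hf2⟩ :=
    HaxellAux.build_IT G c k hdeg hsurj (Finset.univ.card) Finset.univ le_rfl
  exact ⟨f, fun i => hf1 i (Finset.mem_univ i),
    fun i j hij => hf2 i (Finset.mem_univ i) j (Finset.mem_univ j) hij⟩
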